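/- Let a : ℝ → ℝ be differentiable and positive, with Hubble function H = a'/a. Let t_e : ℝ → ℝ be differentiable and satisfy the light-propagation condition t_e'(t₀) = a(t_e(t₀))/a(t₀) for all t₀, and define the redshift z(t₀) by 1 + z(t₀) = a(t₀)/a(t_e(t₀)). Then z is differentiable and obeys the redshift-drift formula dz/dt₀ = (1 + z(t₀))·H(t₀) - H(t_e(t₀)). -/

import Mathlib

/-- Redshift-drift formula: in an expanding universe with scale factor a > 0,
Hubble function H = a'/a, emission time obeying t_e'(t₀) = a(t_e)/a(t₀) and
redshift 1 + z = a(t₀)/a(t_e), the redshift drift is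
dz/dt₀ = (1 + z)H(t₀) - H(t_e(t₀)). -/
theorem stmt18 (a te : ℝ → ℝ) (ha : Differentiable ℝ a) (hpos : ∀ t, 0 < a t)
    (hte : Differentiable ℝ te)
    (hlight : ∀ t₀, deriv te t₀ = a (te t₀) / a t₀) :
    let H : ℝ → ℝ := fun t => deriv a t / a t
    let z : ℝ → ℝ := fun t₀ => a t₀ / a (te t₀) - 1
    Differentiable ℝ z ∧
    (∀ t₀, deriv z t₀ = (1 + z t₀) * H t₀ - H (te t₀)) := by
  intro H z
  have hne : ∀ t, a t ≠ 0 := fun t => (hpos t).ne'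
  have hcomp : Differentiable ℝ (fun t => a (te t)) := ha.comp hte
  have hz : Differentiable ℝ z := (ha.div hcomp (fun t => hne _)).sub_const 1
  refine ⟨hz, fun t₀ => ?_⟩
  have h1 : HasDerivAt (fun t => a (te t)) (deriv a (te t₀) * (a (te t₀) / a t₀)) t₀ := by
    have := (ha (te t₀)).hasDerivAt.comp t₀ (hte t₀).hasDerivAt
    rwa [hlight] at this
  have h3 := ((ha t₀).hasDerivAt.div h1 (hne (te t₀))).sub_const 1
  rw [show deriv z t₀ = _ from h3.deriv]
  simp only [H, z]
  have h4 := hne t₀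
  have h5 := hne (te t₀)
  field_simp
  ring
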